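/- arXiv:2204.03095 — 5 statements merged into one kernel-verified Lean document; each statement's English description precedes it below -/
import Mathlib

section
/- Let A be the free associative algebra over ℂ generated by noncommuting variables u_n, n ∈ ℤ, and let ∂ be the derivation determined by ∂(u_n) = u_{n+1}u_n − u_n u_{n−1} (the nonabelian Volterra flow). Let I be the two-sided ideal generated by the elements f_{i,j} = u_i u_j − ω_{i,j} u_j u_i for i < j, where ω_{i,j} ∈ ℂ* and ω_{j,i} = ω_{i,j}^{-1}. Then ∂(I) ⊆ I if and only if ω_{n,n+1} = ω_{0,1} for all n ∈ ℤ and ω_{n,m} = 1 whenever m − n ≥ 2. -/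
open scoped Classical

noncomputable section

/-- The free associative algebra `A = ℂ⟨u_n : n ∈ ℤ⟩`. -/
abbrev VolA : Type := FreeAlgebra ℂ ℤ

/-- The generators `u_n`. -/
def uu (n : ℤ) : VolA := FreeAlgebra.ι ℂ n

namespace Vol

variable (ω : ℤ → ℤ → ℂ)

/-- product of `ω a b` over elements `b` of `l` with `a < b`. -/
def fac (a : ℤ) (l : List ℤ) : ℂ := (l.map (fun b => if a < b then ω a b else 1)).prod

/-- the inversion cocycle of a word. -/
def cw : List ℤ → ℂ
  | [] => 1
  | a :: l => fac ω a l * cw l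

lemma fac_perm (a : ℤ) {l l' : List ℤ} (h : l.Perm l') : fac ω a l = fac ω a l' :=
  List.Perm.prod_eq (h.map _)

lemma cw_append_swap (a b : ℤ) (hab : a < b) (x y : List ℤ) :
    cw ω (x ++ a :: b :: y) = ω a b * cw ω (x ++ b :: a :: y) := by
  induction x with
  | nil =>
      simp only [List.nil_append, cw, fac, List.map_cons, List.prod_cons]
      rw [if_pos hab, if_neg (by omega)]
      ring
  | cons z x ih =>
      show fac ω z (x ++ a :: b :: y) * cw ω (x ++ a :: b :: y)
        = ω a b * (fac ω z (x ++ b :: a :: y) * cw ω (x ++ b :: a :: y))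
      rw [ih, fac_perm ω z (l := x ++ a :: b :: y) (l' := x ++ b :: a :: y)
        ((List.Perm.refl x).append (List.Perm.swap b a y))]
      ring

lemma cw_triple (a b c : ℤ) :
    cw ω [a, b, c] = (if a < b then ω a b else 1) * ((if a < c then ω a c else 1)
      * (if b < c then ω b c else 1)) := by
  simp [cw, fac, mul_assoc]

lemma mset_ne_of_sum {a b c d e f : ℤ} (h : a + b + c ≠ d + e + f) :
    ((↑[a, b, c] : Multiset ℤ)) ≠ (↑[d, e, f] : Multiset ℤ) := by
  intro hm
  have := congrArg Multiset.sum hm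
  simp at this
  omega

lemma mset_rot1 (a b c : ℤ) : ((↑[a, b, c] : Multiset ℤ)) = (↑[b, c, a] : Multiset ℤ) := by
  refine Multiset.coe_eq_coe.mpr ?_
  exact (List.Perm.swap b a [c]).trans ((List.Perm.swap c a []).cons b)

lemma mset_rot2 (a b c : ℤ) : ((↑[a, b, c] : Multiset ℤ)) = (↑[c, a, b] : Multiset ℤ) := by
  rw [mset_rot1, mset_rot1]

abbrev MA := MonoidAlgebra ℂ (FreeMonoid ℤ)

def T : MA →ₗ[ℂ] (Multiset ℤ →₀ ℂ) :=
  (Finsupp.lsum ℂ (fun w : FreeMonoid ℤ => cw ω w.toList • Finsupp.lsingle (↑w.toList : Multiset ℤ))).comp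
    (MonoidAlgebra.coeffLinearEquiv ℂ).toLinearMap

lemma T_single (w : FreeMonoid ℤ) (r : ℂ) :
    T ω (MonoidAlgebra.single w r)
      = Finsupp.single (↑w.toList : Multiset ℤ) (cw ω w.toList * r) := by
  have hc : (MonoidAlgebra.coeffLinearEquiv ℂ (MonoidAlgebra.single w r) : FreeMonoid ℤ →₀ ℂ)
      = Finsupp.single w r := rfl
  rw [T, LinearMap.comp_apply, LinearEquiv.coe_coe, hc, Finsupp.lsum_single]
  simp [Finsupp.smul_single, smul_eq_mul]

lemma T_vanish (a b : ℤ) (hab : a < b) (p q : MA) :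
    T ω (p * (MonoidAlgebra.single (FreeMonoid.of a * FreeMonoid.of b) 1
      - MonoidAlgebra.single (FreeMonoid.of b * FreeMonoid.of a) (ω a b)) * q) = 0 := by
  induction p using MonoidAlgebra.induction_linear with
  | zero => simp
  | add f g hf hg => rw [add_mul, add_mul, map_add, hf, hg, add_zero]
  | single x r =>
    induction q using MonoidAlgebra.induction_linear with
    | zero => simp
    | add f g hf hg => rw [mul_add, map_add, hf, hg, add_zero]
    | single y s =>
      rw [mul_sub, sub_mul, MonoidAlgebra.single_mul_single, MonoidAlgebra.single_mul_single,
        MonoidAlgebra.single_mul_single, MonoidAlgebra.single_mul_single, map_sub,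
        T_single, T_single]
      have hl1 : (x * (FreeMonoid.of a * FreeMonoid.of b) * y).toList
          = x.toList ++ a :: b :: y.toList := by
        simp [FreeMonoid.toList_of]
      have hl2 : (x * (FreeMonoid.of b * FreeMonoid.of a) * y).toList
          = x.toList ++ b :: a :: y.toList := by
        simp [FreeMonoid.toList_of]
      rw [hl1, hl2]
      have hm : ((x.toList ++ a :: b :: y.toList : List ℤ) : Multiset ℤ)
          = ((x.toList ++ b :: a :: y.toList : List ℤ) : Multiset ℤ) :=
        Multiset.coe_eq_coe.mpr ((List.Perm.refl x.toList).append (List.Perm.swap b a y.toList))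
      rw [hm, cw_append_swap ω a b hab, ← Finsupp.single_sub]
      ring_nf
      simp

abbrev ee : VolA ≃ₐ[ℂ] MA := FreeAlgebra.equivMonoidAlgebraFreeMonoid

lemma ee_uu (n : ℤ) : ee (uu n) = MonoidAlgebra.single (FreeMonoid.of n) 1 := by
  simp [uu, ee, FreeAlgebra.equivMonoidAlgebraFreeMonoid, MonoidAlgebra.of_apply]

/-- the full normal-form linear map on the free algebra. -/
def TT : VolA →ₗ[ℂ] (Multiset ℤ →₀ ℂ) := (T ω).comp (ee.toLinearMap : VolA →ₗ[ℂ] MA)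

lemma TT_gen_context (i j : ℤ) (hij : i < j) (p q : VolA) :
    TT ω (p * (uu i * uu j - ω i j • (uu j * uu i)) * q) = 0 := by
  have he : ee (uu i * uu j - ω i j • (uu j * uu i))
      = MonoidAlgebra.single (FreeMonoid.of i * FreeMonoid.of j) 1
        - MonoidAlgebra.single (FreeMonoid.of j * FreeMonoid.of i) (ω i j) := by
    rw [map_sub, map_mul, map_smul, map_mul, ee_uu, ee_uu, MonoidAlgebra.single_mul_single,
      MonoidAlgebra.single_mul_single, mul_one, MonoidAlgebra.smul_single, smul_eq_mul, mul_one]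
  have h2 : ee (p * (uu i * uu j - ω i j • (uu j * uu i)) * q)
      = ee p * ee (uu i * uu j - ω i j • (uu j * uu i)) * ee q := by
    rw [map_mul, map_mul]
  show T ω (ee (p * (uu i * uu j - ω i j • (uu j * uu i)) * q)) = 0
  rw [h2, he]
  exact T_vanish ω i j hij (ee p) (ee q)

lemma TT_M3 (a b c : ℤ) :
    TT ω (uu a * uu b * uu c)
      = Finsupp.single (↑[a, b, c] : Multiset ℤ) (cw ω [a, b, c]) := by
  have h2 : ee (uu a * uu b * uu c) = ee (uu a) * ee (uu b) * ee (uu c) := by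
    rw [map_mul, map_mul]
  show T ω (ee (uu a * uu b * uu c)) = _
  rw [h2, ee_uu, ee_uu, ee_uu, MonoidAlgebra.single_mul_single,
    MonoidAlgebra.single_mul_single, T_single]
  simp [FreeMonoid.toList_of]

lemma TT_of_mem_span (x : VolA)
    (hx : x ∈ TwoSidedIdeal.span
      {x | ∃ i j : ℤ, i < j ∧ x = uu i * uu j - ω i j • (uu j * uu i)}) :
    TT ω x = 0 := by
  set J := TwoSidedIdeal.mk' {x : VolA | ∀ p q : VolA, TT ω (p * x * q) = 0}
    (by intro p q; simp)
    (by intro x y hx hy p q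
        rw [mul_add, add_mul, map_add, hx p q, hy p q, add_zero])
    (by intro x hx p q
        rw [mul_neg, neg_mul, map_neg, hx p q, neg_zero])
    (by intro x y hy p q
        rw [show p * (x * y) * q = (p * x) * y * q by noncomm_ring]
        exact hy (p * x) q)
    (by intro x y hx p q
        rw [show p * (x * y) * q = p * x * (y * q) by noncomm_ring]
        exact hx p (y * q)) with hJ
  have hxJ : x ∈ J := by
    refine TwoSidedIdeal.mem_span_iff.mp hx J ?_
    rintro z ⟨i, j, hij, rfl⟩
    simp only [SetLike.mem_coe, hJ, TwoSidedIdeal.mem_mk']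
    exact fun p q => TT_gen_context ω i j hij p q
  rw [hJ, TwoSidedIdeal.mem_mk'] at hxJ
  have := hxJ 1 1
  rwa [one_mul, mul_one] at this

lemma Dgen (D : VolA →ₗ[ℂ] VolA)
    (hLeib : ∀ a b : VolA, D (a * b) = D a * b + a * D b)
    (hD : ∀ n : ℤ, D (uu n) = uu (n + 1) * uu n - uu n * uu (n - 1)) (i j : ℤ) :
    D (uu i * uu j - ω i j • (uu j * uu i)) =
      uu (i+1) * uu i * uu j - uu i * uu (i-1) * uu j
        + uu i * uu (j+1) * uu j - uu i * uu j * uu (j-1)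
      - ω i j • (uu (j+1) * uu j * uu i - uu j * uu (j-1) * uu i
        + uu j * uu (i+1) * uu i - uu j * uu i * uu (i-1)) := by
  rw [map_sub, map_smul, hLeib, hLeib, hD, hD]
  simp only [sub_mul, mul_sub, smul_sub, smul_add, ← mul_assoc]
  abel

end Vol

open Vol

/-- the ideal generated by `u_i u_j − ω_{i,j} u_j u_i` (i < j) is stable
under the Volterra derivation iff `ω_{n,n+1} = ω_{0,1}` and `ω_{n,m} = 1` for `m − n ≥ 2`. -/
theorem volterra_quantisation_ideal
    (ω : ℤ → ℤ → ℂ) (hω : ∀ i j : ℤ, i < j → ω i j ≠ 0)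
    (hsym : ∀ i j : ℤ, i < j → ω j i = (ω i j)⁻¹)
    (D : VolA →ₗ[ℂ] VolA)
    (hLeib : ∀ a b : VolA, D (a * b) = D a * b + a * D b)
    (hD : ∀ n : ℤ, D (uu n) = uu (n + 1) * uu n - uu n * uu (n - 1))
    (I : TwoSidedIdeal VolA)
    (hI : I = TwoSidedIdeal.span
      {x | ∃ i j : ℤ, i < j ∧ x = uu i * uu j - ω i j • (uu j * uu i)}) :
    (∀ x ∈ I, D x ∈ I) ↔
      ((∀ n : ℤ, ω n (n + 1) = ω 0 1) ∧ ∀ n m : ℤ, n + 2 ≤ m → ω n m = 1) := by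
  constructor
  · intro hstab
    have hgen : ∀ i j : ℤ, i < j → (uu i * uu j - ω i j • (uu j * uu i)) ∈ I := by
      intro i j hij
      rw [hI]
      exact TwoSidedIdeal.subset_span ⟨i, j, hij, rfl⟩
    have hTT0 : ∀ i j : ℤ, i < j →
        TT ω (uu (i+1) * uu i * uu j - uu i * uu (i-1) * uu j
          + uu i * uu (j+1) * uu j - uu i * uu j * uu (j-1)
          - ω i j • (uu (j+1) * uu j * uu i - uu j * uu (j-1) * uu i
            + uu j * uu (i+1) * uu i - uu j * uu i * uu (i-1))) = 0 := by
      intro i j hij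
      have h1 := hstab _ (hgen i j hij)
      rw [hI] at h1
      have h2 := TT_of_mem_span ω _ h1
      rwa [Dgen ω D hLeib hD i j] at h2
    -- E1 : ω n (n+2) = 1
    have e1 : ∀ n : ℤ, ω n (n + 2) = 1 := by
      intro n
      have h := hTT0 n (n+1) (by omega)
      simp only [show n+1+1 = n+2 by ring, show n+1-1 = n by ring] at h
      simp only [map_sub, map_add, map_smul, TT_M3] at h
      have h' := DFunLike.congr_fun h (↑[n+2, n+1, n] : Multiset ℤ)
      have hne1 : (↑[n+1, n, n+1] : Multiset ℤ) ≠ ↑[n+2, n+1, n] := mset_ne_of_sum (by omega)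
      have hne2 : (↑[n, n-1, n+1] : Multiset ℤ) ≠ ↑[n+2, n+1, n] := mset_ne_of_sum (by omega)
      have hne4 : (↑[n, n+1, n] : Multiset ℤ) ≠ ↑[n+2, n+1, n] := mset_ne_of_sum (by omega)
      have hne6 : (↑[n+1, n, n] : Multiset ℤ) ≠ ↑[n+2, n+1, n] := mset_ne_of_sum (by omega)
      have hne7 : (↑[n+1, n+1, n] : Multiset ℤ) ≠ ↑[n+2, n+1, n] := mset_ne_of_sum (by omega)
      have hne8 : (↑[n+1, n, n-1] : Multiset ℤ) ≠ ↑[n+2, n+1, n] := mset_ne_of_sum (by omega)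
      have heq3 : (↑[n, n+2, n+1] : Multiset ℤ) = ↑[n+2, n+1, n] := mset_rot1 n (n+2) (n+1)
      have f1 : n < n+2 := by omega
      have f2 : n < n+1 := by omega
      have f3 : ¬ (n+2 < n+1) := by omega
      have f4 : ¬ (n+1 < n) := by omega
      have f5 : ¬ (n+2 < n) := by omega
      simp only [Finsupp.sub_apply, Finsupp.add_apply, Finsupp.smul_apply, Finsupp.coe_zero,
        Pi.zero_apply, Finsupp.single_apply, heq3, if_pos rfl, if_neg hne1, if_neg hne2,
        if_neg hne4, if_neg hne6, if_neg hne7, if_neg hne8, smul_eq_mul, eq_self_iff_true, if_true] at h'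
      simp only [cw_triple, if_pos f1, if_pos f2, if_neg f3, if_neg f4, if_neg f5] at h'
      have hnz := hω n (n+1) (by omega)
      apply mul_right_cancel₀ hnz
      rw [one_mul]
      linear_combination h'
    -- E3 : ω (n+1) (n+2) = ω n (n+1)
    have e3 : ∀ n : ℤ, ω (n+1) (n+2) = ω n (n+1) := by
      intro n
      have h := hTT0 n (n+2) (by omega)
      simp only [show n+2+1 = n+3 by ring, show n+2-1 = n+1 by ring] at h
      simp only [map_sub, map_add, map_smul, TT_M3] at h
      have h' := DFunLike.congr_fun h (↑[n+2, n+1, n] : Multiset ℤ)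
      have hne2 : (↑[n, n-1, n+2] : Multiset ℤ) ≠ ↑[n+2, n+1, n] := mset_ne_of_sum (by omega)
      have hne3 : (↑[n, n+3, n+2] : Multiset ℤ) ≠ ↑[n+2, n+1, n] := mset_ne_of_sum (by omega)
      have hne5 : (↑[n+3, n+2, n] : Multiset ℤ) ≠ ↑[n+2, n+1, n] := mset_ne_of_sum (by omega)
      have hne8 : (↑[n+2, n, n-1] : Multiset ℤ) ≠ ↑[n+2, n+1, n] := mset_ne_of_sum (by omega)
      have heq1 : (↑[n+1, n, n+2] : Multiset ℤ) = ↑[n+2, n+1, n] := mset_rot2 (n+1) n (n+2)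
      have heq4 : (↑[n, n+2, n+1] : Multiset ℤ) = ↑[n+2, n+1, n] := mset_rot1 n (n+2) (n+1)
      have g1 : n < n+1 := by omega
      have g2 : n < n+2 := by omega
      have g3 : n+1 < n+2 := by omega
      have g4 : ¬ (n+1 < n) := by omega
      have g5 : ¬ (n+2 < n+1) := by omega
      have g6 : ¬ (n+2 < n) := by omega
      simp only [Finsupp.sub_apply, Finsupp.add_apply, Finsupp.smul_apply, Finsupp.coe_zero,
        Pi.zero_apply, Finsupp.single_apply, heq1, heq4, if_pos rfl, if_neg hne2, if_neg hne3,
        if_neg hne5, if_neg hne8, smul_eq_mul, eq_self_iff_true, if_true] at h'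
      simp only [cw_triple, if_pos g1, if_pos g2, if_pos g3, if_neg g4, if_neg g5,
        if_neg g6] at h'
      have hnz := hω n (n+2) (by omega)
      apply mul_right_cancel₀ hnz
      linear_combination h'
    -- E4 : ω n (m+1) = 1 for m ≥ n+2
    have e4 : ∀ n m : ℤ, n + 2 ≤ m → ω n (m+1) = 1 := by
      intro n m hnm
      have h := hTT0 n m (by omega)
      simp only [map_sub, map_add, map_smul, TT_M3] at h
      have h' := DFunLike.congr_fun h (↑[m+1, m, n] : Multiset ℤ)
      have hne1 : (↑[n+1, n, m] : Multiset ℤ) ≠ ↑[m+1, m, n] := mset_ne_of_sum (by omega)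
      have hne2 : (↑[n, n-1, m] : Multiset ℤ) ≠ ↑[m+1, m, n] := mset_ne_of_sum (by omega)
      have hne4 : (↑[n, m, m-1] : Multiset ℤ) ≠ ↑[m+1, m, n] := mset_ne_of_sum (by omega)
      have hne6 : (↑[m, m-1, n] : Multiset ℤ) ≠ ↑[m+1, m, n] := mset_ne_of_sum (by omega)
      have hne7 : (↑[m, n+1, n] : Multiset ℤ) ≠ ↑[m+1, m, n] := mset_ne_of_sum (by omega)
      have hne8 : (↑[m, n, n-1] : Multiset ℤ) ≠ ↑[m+1, m, n] := mset_ne_of_sum (by omega)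
      have heq3 : (↑[n, m+1, m] : Multiset ℤ) = ↑[m+1, m, n] := mset_rot1 n (m+1) m
      have q1 : n < m+1 := by omega
      have q2 : n < m := by omega
      have q3 : ¬ (m+1 < m) := by omega
      have q4 : ¬ (m+1 < n) := by omega
      have q5 : ¬ (m < n) := by omega
      simp only [Finsupp.sub_apply, Finsupp.add_apply, Finsupp.smul_apply, Finsupp.coe_zero,
        Pi.zero_apply, Finsupp.single_apply, heq3, if_pos rfl, if_neg hne1, if_neg hne2,
        if_neg hne4, if_neg hne6, if_neg hne7, if_neg hne8, smul_eq_mul, eq_self_iff_true,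
        if_true] at h'
      simp only [cw_triple, if_pos q1, if_pos q2, if_neg q3, if_neg q4, if_neg q5] at h'
      have hnz := hω n m (by omega)
      apply mul_right_cancel₀ hnz
      rw [one_mul]
      linear_combination h'
    refine ⟨?_, ?_⟩
    · intro n
      induction n using Int.induction_on with
      | zero => rfl
      | succ k ih =>
          rw [show (k:ℤ)+1+1 = k+2 by ring, e3 k]
          exact ih
      | pred k ih =>
          have h3 := e3 (-(k:ℤ)-1)
          rw [show (-(k:ℤ)-1+1) = -k by ring, show (-(k:ℤ)-1+2) = -k+1 by ring] at h3
          rw [show (-(k:ℤ)-1+1) = -k by ring, ← h3]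
          exact ih
    · intro n m hnm
      rcases eq_or_lt_of_le hnm with h | h
      · rw [← h]
        exact e1 n
      · have h4 := e4 n (m-1) (by omega)
        rwa [show m-1+1 = m by ring] at h4
  · rintro ⟨hA, hB⟩ x hx
    have hg : ∀ a b : ℤ, a < b → uu a * uu b - ω a b • (uu b * uu a) ∈ I := by
      intro a b hab
      rw [hI]
      exact TwoSidedIdeal.subset_span ⟨a, b, hab, rfl⟩
    have hc : ∀ a b : ℤ, a < b → ω a b = 1 → uu a * uu b - uu b * uu a ∈ I := by
      intro a b hab h1
      have := hg a b hab
      rwa [h1, one_smul] at this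
    have hAn : ∀ a : ℤ, ω a (a+1) = ω 0 1 := hA
    -- the key computation : D of every generator is in I
    have key : ∀ i j : ℤ, i < j → D (uu i * uu j - ω i j • (uu j * uu i)) ∈ I := by
      intro i j hij
      rw [Dgen ω D hLeib hD i j]
      have h3 : (3:ℤ) = 3 := rfl
      rcases (by omega : j = i + 1 ∨ j = i + 2 ∨ i + 3 ≤ j) with rfl | rfl | hj
      · -- nearest neighbour case
        simp only [show i+1+1 = i+2 by ring, show i+1-1 = i by ring]
        have hkey :
            uu (i+1) * uu i * uu (i+1) - uu i * uu (i-1) * uu (i+1)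
              + uu i * uu (i+2) * uu (i+1) - uu i * uu (i+1) * uu i
              - ω i (i+1) • (uu (i+2) * uu (i+1) * uu i - uu (i+1) * uu i * uu i
                + uu (i+1) * uu (i+1) * uu i - uu (i+1) * uu i * uu (i-1))
            = uu (i+1) * (uu i * uu (i+1) - ω i (i+1) • (uu (i+1) * uu i))
              - (uu i * uu (i+1) - ω i (i+1) • (uu (i+1) * uu i)) * uu i
              - uu i * (uu (i-1) * uu (i+1) - uu (i+1) * uu (i-1))
              - (uu i * uu (i+1) - ω i (i+1) • (uu (i+1) * uu i)) * uu (i-1)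
              + (uu i * uu (i+2) - uu (i+2) * uu i) * uu (i+1)
              + uu (i+2) * (uu i * uu (i+1) - ω i (i+1) • (uu (i+1) * uu i)) := by
          simp only [mul_sub, sub_mul, smul_sub, smul_add, mul_smul_comm, smul_mul_assoc,
            ← mul_assoc]
          abel
        rw [hkey]
        have m1 := hg i (i+1) (by omega)
        have m2 := hc (i-1) (i+1) (by omega) (hB (i-1) (i+1) (by omega))
        have m3 := hc i (i+2) (by omega) (hB i (i+2) (by omega))
        exact I.add_mem (I.add_mem (I.sub_mem (I.sub_mem (I.sub_mem
          (I.mul_mem_left _ _ m1) (I.mul_mem_right _ _ m1))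
          (I.mul_mem_left _ _ m2)) (I.mul_mem_right _ _ m1))
          (I.mul_mem_right _ _ m3)) (I.mul_mem_left _ _ m1)
      · -- next-to-nearest case
        simp only [show i+2+1 = i+3 by ring, show i+2-1 = i+1 by ring,
          hB i (i+2) (by omega), one_smul]
        have hq : ω (i+1) (i+2) = ω i (i+1) := by
          have h1 := hAn (i+1)
          rw [show (i:ℤ)+1+1 = i+2 by ring] at h1
          rw [h1, hAn i]
        have hkey :
            uu (i+1) * uu i * uu (i+2) - uu i * uu (i-1) * uu (i+2)
              + uu i * uu (i+3) * uu (i+2) - uu i * uu (i+2) * uu (i+1)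
              - (uu (i+3) * uu (i+2) * uu i - uu (i+2) * uu (i+1) * uu i
                + uu (i+2) * uu (i+1) * uu i - uu (i+2) * uu i * uu (i-1))
            = uu (i+1) * (uu i * uu (i+2) - uu (i+2) * uu i)
              + (uu (i+1) * uu (i+2) - ω i (i+1) • (uu (i+2) * uu (i+1))) * uu i
              - (uu i * uu (i+2) - uu (i+2) * uu i) * uu (i+1)
              - uu (i+2) * (uu i * uu (i+1) - ω i (i+1) • (uu (i+1) * uu i))
              - uu i * (uu (i-1) * uu (i+2) - uu (i+2) * uu (i-1))
              - (uu i * uu (i+2) - uu (i+2) * uu i) * uu (i-1)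
              + (uu i * uu (i+3) - uu (i+3) * uu i) * uu (i+2)
              + uu (i+3) * (uu i * uu (i+2) - uu (i+2) * uu i) := by
          simp only [mul_sub, sub_mul, smul_sub, smul_add, mul_smul_comm, smul_mul_assoc,
            ← mul_assoc]
          abel
        rw [hkey]
        have m0 := hc i (i+2) (by omega) (hB i (i+2) (by omega))
        have m1 : uu (i+1) * uu (i+2) - ω i (i+1) • (uu (i+2) * uu (i+1)) ∈ I := by
          have := hg (i+1) (i+2) (by omega)
          rwa [hq] at this
        have m2 := hg i (i+1) (by omega)
        have m3 := hc (i-1) (i+2) (by omega) (hB (i-1) (i+2) (by omega))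
        have m4 := hc i (i+3) (by omega) (hB i (i+3) (by omega))
        exact I.add_mem (I.add_mem (I.sub_mem (I.sub_mem (I.sub_mem (I.sub_mem
          (I.add_mem (I.mul_mem_left _ _ m0) (I.mul_mem_right _ _ m1))
          (I.mul_mem_right _ _ m0)) (I.mul_mem_left _ _ m2))
          (I.mul_mem_left _ _ m3)) (I.mul_mem_right _ _ m0))
          (I.mul_mem_right _ _ m4)) (I.mul_mem_left _ _ m0)
      · -- distant case
        simp only [hB i j (by omega), one_smul]
        have hkey :
            uu (i+1) * uu i * uu j - uu i * uu (i-1) * uu j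
              + uu i * uu (j+1) * uu j - uu i * uu j * uu (j-1)
              - (uu (j+1) * uu j * uu i - uu j * uu (j-1) * uu i
                + uu j * uu (i+1) * uu i - uu j * uu i * uu (i-1))
            = uu (i+1) * (uu i * uu j - uu j * uu i)
              + (uu (i+1) * uu j - uu j * uu (i+1)) * uu i
              - uu i * (uu (i-1) * uu j - uu j * uu (i-1))
              - (uu i * uu j - uu j * uu i) * uu (i-1)
              + uu (j+1) * (uu i * uu j - uu j * uu i)
              + (uu i * uu (j+1) - uu (j+1) * uu i) * uu j
              - uu j * (uu i * uu (j-1) - uu (j-1) * uu i)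
              - (uu i * uu j - uu j * uu i) * uu (j-1) := by
          simp only [mul_sub, sub_mul, ← mul_assoc]
          abel
        rw [hkey]
        have m0 := hc i j (by omega) (hB i j (by omega))
        have m1 := hc (i+1) j (by omega) (hB (i+1) j (by omega))
        have m2 := hc (i-1) j (by omega) (hB (i-1) j (by omega))
        have m3 := hc i (j+1) (by omega) (hB i (j+1) (by omega))
        have m4 := hc i (j-1) (by omega) (hB i (j-1) (by omega))
        exact I.sub_mem (I.sub_mem (I.add_mem (I.add_mem (I.sub_mem (I.sub_mem
          (I.add_mem (I.mul_mem_left _ _ m0) (I.mul_mem_right _ _ m1))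
          (I.mul_mem_left _ _ m2)) (I.mul_mem_right _ _ m0))
          (I.mul_mem_left _ _ m0)) (I.mul_mem_right _ _ m3))
          (I.mul_mem_left _ _ m4)) (I.mul_mem_right _ _ m0)
    -- bootstrap : the set of x ∈ I with D x ∈ I is a two-sided ideal containing the generators
    set J := TwoSidedIdeal.mk' {x : VolA | x ∈ I ∧ D x ∈ I}
      (⟨I.zero_mem, by rw [map_zero]; exact I.zero_mem⟩)
      (fun {x y} hx hy => ⟨I.add_mem hx.1 hy.1, by rw [map_add]; exact I.add_mem hx.2 hy.2⟩)
      (fun {x} hx => ⟨I.neg_mem hx.1, by rw [map_neg]; exact I.neg_mem hx.2⟩)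
      (fun {x y} hy => ⟨I.mul_mem_left x y hy.1, by
        rw [hLeib]
        exact I.add_mem (I.mul_mem_left _ _ hy.1) (I.mul_mem_left _ _ hy.2)⟩)
      (fun {x y} hx => ⟨I.mul_mem_right x y hx.1, by
        rw [hLeib]
        exact I.add_mem (I.mul_mem_right _ _ hx.2) (I.mul_mem_right _ _ hx.1)⟩) with hJ
    have hxJ : x ∈ J := by
      rw [hI] at hx
      refine TwoSidedIdeal.mem_span_iff.mp hx J ?_
      rintro z ⟨i, j, hij, rfl⟩
      simp only [SetLike.mem_coe, hJ, TwoSidedIdeal.mem_mk']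
      exact ⟨hg i j hij, key i j hij⟩
    rw [hJ, TwoSidedIdeal.mem_mk'] at hxJ
    exact hxJ.2
end
end

section
/- Let A₃ = ℂ⟨u₁,u₂,u₃⟩ and let I be the ideal generated by q^{-1}u_n u_{n+1} − q u_{n+1}u_n − iθ for n ∈ ℤ/3, where q = e^{iℏ}, ℏ, θ ∈ ℝ. In A₃/I, the element 𝓗 = sin(ℏ)·H₂ + θ(2 + cos(2ℏ))·H₁ is central, where H₁ = u₁+u₂+u₃ and H₂ = Σ_{σ ∈ S₃} u_{σ(1)}u_{σ(2)}u_{σ(3)} (sum over all six orderings of the product u₁u₂u₃). -/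
open scoped Classical

noncomputable section

abbrev A3 : Type := FreeAlgebra ℂ (ZMod 3)

def v3 (n : ZMod 3) : A3 := FreeAlgebra.ι ℂ n

set_option maxHeartbeats 12000000 in
private lemma aux0 (q : ℂ) (hq0 : q ≠ 0) (θ : ℝ) :
    ((Complex.I / 2 * (q⁻¹ - q)) • (v3 0 * (v3 1 * v3 2) + v3 1 * (v3 0 * v3 2) + v3 2 * (v3 1 * v3 0)
      + v3 0 * (v3 2 * v3 1) + v3 1 * (v3 2 * v3 0) + v3 2 * (v3 0 * v3 1))
      + ((θ : ℂ) * (2 + (q ^ 2 + q⁻¹ ^ 2) / 2)) • (v3 0 + v3 1 + v3 2)) * v3 0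
    - v3 0 * ((Complex.I / 2 * (q⁻¹ - q)) • (v3 0 * (v3 1 * v3 2) + v3 1 * (v3 0 * v3 2) + v3 2 * (v3 1 * v3 0)
      + v3 0 * (v3 2 * v3 1) + v3 1 * (v3 2 * v3 0) + v3 2 * (v3 0 * v3 1))
      + ((θ : ℂ) * (2 + (q ^ 2 + q⁻¹ ^ 2) / 2)) • (v3 0 + v3 1 + v3 2)) =
      ((((-1)/2) : ℂ) * Complex.I * q⁻¹^2 + ((1/2) : ℂ) * Complex.I * q^2) • ((v3 0) * ((q⁻¹ • (v3 0 * v3 1) - q • (v3 1 * v3 0) - algebraMap ℂ A3 (Complex.I * (θ:ℂ))) * (v3 2))) +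
      ((((-1)/2) : ℂ) * Complex.I + ((1/2) : ℂ) * Complex.I * q^2) • ((1 : A3) * ((q⁻¹ • (v3 0 * v3 1) - q • (v3 1 * v3 0) - algebraMap ℂ A3 (Complex.I * (θ:ℂ))) * (v3 0 * (v3 2)))) +
      ((((-1)/2) : ℂ) * Complex.I + ((1/2) : ℂ) * Complex.I * q^2) • ((v3 0 * (v3 2)) * ((q⁻¹ • (v3 0 * v3 1) - q • (v3 1 * v3 0) - algebraMap ℂ A3 (Complex.I * (θ:ℂ))) * (1 : A3))) +
      (((1/2) : ℂ) * Complex.I * q⁻¹^2 + (((-1)/2) : ℂ) * Complex.I * q^2) • ((v3 0 * (v3 1)) * ((q⁻¹ • (v3 2 * v3 0) - q • (v3 0 * v3 2) - algebraMap ℂ A3 (Complex.I * (θ:ℂ))) * (1 : A3))) +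
      (((1/2) : ℂ) * Complex.I * q⁻¹^2 + (((-1)/2) : ℂ) * Complex.I) • ((v3 0 * (v3 0)) * ((q⁻¹ • (v3 1 * v3 2) - q • (v3 2 * v3 1) - algebraMap ℂ A3 (Complex.I * (θ:ℂ))) * (1 : A3))) +
      (((1/2) : ℂ) * Complex.I + (((-1)/2) : ℂ) * Complex.I * q^2) • ((v3 0) * ((q⁻¹ • (v3 1 * v3 2) - q • (v3 2 * v3 1) - algebraMap ℂ A3 (Complex.I * (θ:ℂ))) * (v3 0))) +
      (((1/2) : ℂ) * Complex.I + (((-1)/2) : ℂ) * Complex.I * q^2) • ((v3 1 * (v3 0)) * ((q⁻¹ • (v3 2 * v3 0) - q • (v3 0 * v3 2) - algebraMap ℂ A3 (Complex.I * (θ:ℂ))) * (1 : A3))) +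
      ((((-1)/2) : ℂ) * Complex.I * q⁻¹^2 + ((1/2) : ℂ) * Complex.I * q^2) • ((1 : A3) * ((q⁻¹ • (v3 1 * v3 2) - q • (v3 2 * v3 1) - algebraMap ℂ A3 (Complex.I * (θ:ℂ))) * (v3 0 * (v3 0)))) +
      (((1/2) : ℂ) * Complex.I + (((-1)/2) : ℂ) * Complex.I * q^2) • ((v3 2) * ((q⁻¹ • (v3 0 * v3 1) - q • (v3 1 * v3 0) - algebraMap ℂ A3 (Complex.I * (θ:ℂ))) * (v3 0))) +
      (((1/2) : ℂ) * Complex.I * q⁻¹^2 + ((1/2) : ℂ) * Complex.I + ((-1) : ℂ) * Complex.I * q^2) • ((v3 1) * ((q⁻¹ • (v3 2 * v3 0) - q • (v3 0 * v3 2) - algebraMap ℂ A3 (Complex.I * (θ:ℂ))) * (v3 0))) +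
      ((((-1)/2) : ℂ) * Complex.I * q⁻¹^2 + (((-1)/2) : ℂ) * Complex.I + (1 : ℂ) * Complex.I * q^2) • ((1 : A3) * ((q⁻¹ • (v3 0 * v3 1) - q • (v3 1 * v3 0) - algebraMap ℂ A3 (Complex.I * (θ:ℂ))) * (v3 2 * (v3 0)))) +
      (((-1) : ℂ) * q⁻¹ * (θ:ℂ) + ((-2) : ℂ) * q * (θ:ℂ)) • ((1 : A3) * ((q⁻¹ • (v3 0 * v3 1) - q • (v3 1 * v3 0) - algebraMap ℂ A3 (Complex.I * (θ:ℂ))) * (1 : A3))) +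
      ((1 : ℂ) * q⁻¹ * (θ:ℂ) + (2 : ℂ) * q * (θ:ℂ)) • ((1 : A3) * ((q⁻¹ • (v3 2 * v3 0) - q • (v3 0 * v3 2) - algebraMap ℂ A3 (Complex.I * (θ:ℂ))) * (1 : A3))) := by
  simp only [Algebra.algebraMap_eq_smul_one, smul_add, smul_sub, smul_smul, add_mul, mul_add,
    sub_mul, mul_sub, smul_mul_assoc, mul_smul_comm, one_mul, mul_one, mul_assoc]
  match_scalars
  all_goals try ring
  all_goals try field_simp
  all_goals try ring
  all_goals try simp only [inv_pow]
  all_goals try field_simp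
  all_goals try ring
  all_goals try simp only [Complex.I_sq]
  all_goals try ring

set_option maxHeartbeats 12000000 in
private lemma aux1 (q : ℂ) (hq0 : q ≠ 0) (θ : ℝ) :
    ((Complex.I / 2 * (q⁻¹ - q)) • (v3 0 * (v3 1 * v3 2) + v3 1 * (v3 0 * v3 2) + v3 2 * (v3 1 * v3 0)
      + v3 0 * (v3 2 * v3 1) + v3 1 * (v3 2 * v3 0) + v3 2 * (v3 0 * v3 1))
      + ((θ : ℂ) * (2 + (q ^ 2 + q⁻¹ ^ 2) / 2)) • (v3 0 + v3 1 + v3 2)) * v3 1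
    - v3 1 * ((Complex.I / 2 * (q⁻¹ - q)) • (v3 0 * (v3 1 * v3 2) + v3 1 * (v3 0 * v3 2) + v3 2 * (v3 1 * v3 0)
      + v3 0 * (v3 2 * v3 1) + v3 1 * (v3 2 * v3 0) + v3 2 * (v3 0 * v3 1))
      + ((θ : ℂ) * (2 + (q ^ 2 + q⁻¹ ^ 2) / 2)) • (v3 0 + v3 1 + v3 2)) =
      (((1/2) : ℂ) * Complex.I * q⁻¹^2 + (((-1)/2) : ℂ) * Complex.I * q^2) • ((1 : A3) * ((q⁻¹ • (v3 0 * v3 1) - q • (v3 1 * v3 0) - algebraMap ℂ A3 (Complex.I * (θ:ℂ))) * (v3 2 * (v3 1)))) +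
      (((1/2) : ℂ) * Complex.I * q⁻¹^2 + (((-1)/2) : ℂ) * Complex.I) • ((v3 1) * ((q⁻¹ • (v3 0 * v3 1) - q • (v3 1 * v3 0) - algebraMap ℂ A3 (Complex.I * (θ:ℂ))) * (v3 2))) +
      ((((-1)/2) : ℂ) * Complex.I * q⁻¹^2 + ((1/2) : ℂ) * Complex.I) • ((v3 0) * ((q⁻¹ • (v3 1 * v3 2) - q • (v3 2 * v3 1) - algebraMap ℂ A3 (Complex.I * (θ:ℂ))) * (v3 1))) +
      ((((-1)/2) : ℂ) * Complex.I * q⁻¹^2 + ((1/2) : ℂ) * Complex.I * q^2) • ((v3 1 * (v3 0)) * ((q⁻¹ • (v3 1 * v3 2) - q • (v3 2 * v3 1) - algebraMap ℂ A3 (Complex.I * (θ:ℂ))) * (1 : A3))) +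
      ((((-1)/2) : ℂ) * Complex.I + ((1/2) : ℂ) * Complex.I * q^2) • ((v3 1) * ((q⁻¹ • (v3 1 * v3 2) - q • (v3 2 * v3 1) - algebraMap ℂ A3 (Complex.I * (θ:ℂ))) * (v3 0))) +
      ((((-1)/2) : ℂ) * Complex.I + ((1/2) : ℂ) * Complex.I * q^4) • ((1 : A3) * ((q⁻¹ • (v3 1 * v3 2) - q • (v3 2 * v3 1) - algebraMap ℂ A3 (Complex.I * (θ:ℂ))) * (v3 1 * (v3 0)))) +
      (((1/2) : ℂ) * Complex.I + (((-1)/2) : ℂ) * Complex.I * q^2) • ((v3 2) * ((q⁻¹ • (v3 0 * v3 1) - q • (v3 1 * v3 0) - algebraMap ℂ A3 (Complex.I * (θ:ℂ))) * (v3 1))) +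
      (((1/2) : ℂ) * Complex.I + (((-1)/2) : ℂ) * Complex.I * q^4) • ((v3 2 * (v3 1)) * ((q⁻¹ • (v3 0 * v3 1) - q • (v3 1 * v3 0) - algebraMap ℂ A3 (Complex.I * (θ:ℂ))) * (1 : A3))) +
      ((1 : ℂ) * q⁻¹ * (θ:ℂ) + ((3/2) : ℂ) * q * (θ:ℂ) + ((1/2) : ℂ) * q^3 * (θ:ℂ)) • ((1 : A3) * ((q⁻¹ • (v3 0 * v3 1) - q • (v3 1 * v3 0) - algebraMap ℂ A3 (Complex.I * (θ:ℂ))) * (1 : A3))) +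
      (((-1) : ℂ) * q⁻¹ * (θ:ℂ) + (((-3)/2) : ℂ) * q * (θ:ℂ) + (((-1)/2) : ℂ) * q^3 * (θ:ℂ)) • ((1 : A3) * ((q⁻¹ • (v3 1 * v3 2) - q • (v3 2 * v3 1) - algebraMap ℂ A3 (Complex.I * (θ:ℂ))) * (1 : A3))) := by
  simp only [Algebra.algebraMap_eq_smul_one, smul_add, smul_sub, smul_smul, add_mul, mul_add,
    sub_mul, mul_sub, smul_mul_assoc, mul_smul_comm, one_mul, mul_one, mul_assoc]
  match_scalars
  all_goals try ring
  all_goals try field_simp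
  all_goals try ring
  all_goals try simp only [inv_pow]
  all_goals try field_simp
  all_goals try ring
  all_goals try simp only [Complex.I_sq]
  all_goals try ring

set_option maxHeartbeats 12000000 in
private lemma aux2 (q : ℂ) (hq0 : q ≠ 0) (θ : ℝ) :
    ((Complex.I / 2 * (q⁻¹ - q)) • (v3 0 * (v3 1 * v3 2) + v3 1 * (v3 0 * v3 2) + v3 2 * (v3 1 * v3 0)
      + v3 0 * (v3 2 * v3 1) + v3 1 * (v3 2 * v3 0) + v3 2 * (v3 0 * v3 1))
      + ((θ : ℂ) * (2 + (q ^ 2 + q⁻¹ ^ 2) / 2)) • (v3 0 + v3 1 + v3 2)) * v3 2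
    - v3 2 * ((Complex.I / 2 * (q⁻¹ - q)) • (v3 0 * (v3 1 * v3 2) + v3 1 * (v3 0 * v3 2) + v3 2 * (v3 1 * v3 0)
      + v3 0 * (v3 2 * v3 1) + v3 1 * (v3 2 * v3 0) + v3 2 * (v3 0 * v3 1))
      + ((θ : ℂ) * (2 + (q ^ 2 + q⁻¹ ^ 2) / 2)) • (v3 0 + v3 1 + v3 2)) =
      ((((-1)/2) : ℂ) * Complex.I * q⁻¹^2 + ((1/2) : ℂ) * Complex.I) • ((1 : A3) * ((q⁻¹ • (v3 0 * v3 1) - q • (v3 1 * v3 0) - algebraMap ℂ A3 (Complex.I * (θ:ℂ))) * (v3 2 * (v3 2)))) +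
      ((1 : ℂ) * Complex.I + (((-1)/2) : ℂ) * Complex.I * q^2 + (((-1)/2) : ℂ) * Complex.I * q^4) • ((v3 0 * (v3 2)) * ((q⁻¹ • (v3 1 * v3 2) - q • (v3 2 * v3 1) - algebraMap ℂ A3 (Complex.I * (θ:ℂ))) * (1 : A3))) +
      (((1/2) : ℂ) * Complex.I * q⁻¹^2 + (((-1)/2) : ℂ) * Complex.I * q^2) • ((v3 0) * ((q⁻¹ • (v3 1 * v3 2) - q • (v3 2 * v3 1) - algebraMap ℂ A3 (Complex.I * (θ:ℂ))) * (v3 2))) +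
      (((1/2) : ℂ) * Complex.I + (((-1)/2) : ℂ) * Complex.I * q^2) • ((1 : A3) * ((q⁻¹ • (v3 1 * v3 2) - q • (v3 2 * v3 1) - algebraMap ℂ A3 (Complex.I * (θ:ℂ))) * (v3 0 * (v3 2)))) +
      (((-1) : ℂ) * Complex.I + ((1/2) : ℂ) * Complex.I * q^2 + ((1/2) : ℂ) * Complex.I * q^4) • ((1 : A3) * ((q⁻¹ • (v3 2 * v3 0) - q • (v3 0 * v3 2) - algebraMap ℂ A3 (Complex.I * (θ:ℂ))) * (v3 2 * (v3 1)))) +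
      ((((-1)/2) : ℂ) * Complex.I * q⁻¹^2 + ((1/2) : ℂ) * Complex.I * q^2) • ((v3 2 * (v3 0)) * ((q⁻¹ • (v3 1 * v3 2) - q • (v3 2 * v3 1) - algebraMap ℂ A3 (Complex.I * (θ:ℂ))) * (1 : A3))) +
      (((1/2) : ℂ) * Complex.I * q⁻¹^2 + (((-1)/2) : ℂ) * Complex.I * q^2) • ((v3 2) * ((q⁻¹ • (v3 0 * v3 1) - q • (v3 1 * v3 0) - algebraMap ℂ A3 (Complex.I * (θ:ℂ))) * (v3 2))) +
      (((1/2) : ℂ) * Complex.I * q⁻¹^2 + (((-1)/2) : ℂ) * Complex.I * q^2) • ((v3 2) * ((q⁻¹ • (v3 1 * v3 2) - q • (v3 2 * v3 1) - algebraMap ℂ A3 (Complex.I * (θ:ℂ))) * (v3 0))) +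
      ((((-1)/2) : ℂ) * Complex.I + ((1/2) : ℂ) * Complex.I * q^2) • ((v3 2 * (v3 2)) * ((q⁻¹ • (v3 0 * v3 1) - q • (v3 1 * v3 0) - algebraMap ℂ A3 (Complex.I * (θ:ℂ))) * (1 : A3))) +
      ((((-1)/2) : ℂ) * Complex.I * q⁻¹^2 + (((-1)/2) : ℂ) * Complex.I + (1 : ℂ) * Complex.I * q^2) • ((v3 2 * (v3 1)) * ((q⁻¹ • (v3 2 * v3 0) - q • (v3 0 * v3 2) - algebraMap ℂ A3 (Complex.I * (θ:ℂ))) * (1 : A3))) +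
      (((1/2) : ℂ) * q⁻¹ * (θ:ℂ) + (2 : ℂ) * q * (θ:ℂ) + ((1/2) : ℂ) * q^3 * (θ:ℂ)) • ((1 : A3) * ((q⁻¹ • (v3 1 * v3 2) - q • (v3 2 * v3 1) - algebraMap ℂ A3 (Complex.I * (θ:ℂ))) * (1 : A3))) +
      ((((-1)/2) : ℂ) * q⁻¹ * (θ:ℂ) + ((-2) : ℂ) * q * (θ:ℂ) + (((-1)/2) : ℂ) * q^3 * (θ:ℂ)) • ((1 : A3) * ((q⁻¹ • (v3 2 * v3 0) - q • (v3 0 * v3 2) - algebraMap ℂ A3 (Complex.I * (θ:ℂ))) * (1 : A3))) := by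
  simp only [Algebra.algebraMap_eq_smul_one, smul_add, smul_sub, smul_smul, add_mul, mul_add,
    sub_mul, mul_sub, smul_mul_assoc, mul_smul_comm, one_mul, mul_one, mul_assoc]
  match_scalars
  all_goals try ring
  all_goals try field_simp
  all_goals try ring
  all_goals try simp only [inv_pow]
  all_goals try field_simp
  all_goals try ring
  all_goals try simp only [Complex.I_sq]
  all_goals try ring

/-- for `q = e^{iℏ}`, in `A₃/I` with relations
`q⁻¹ u_n u_{n+1} − q u_{n+1}u_n − iθ` (n mod 3), the element
`𝓗 = sin(ℏ)·H₂ + θ(2+cos(2ℏ))·H₁` is central, where `H₁ = u₁+u₂+u₃` and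
`H₂ = Σ_{σ∈S₃} u_{σ(1)}u_{σ(2)}u_{σ(3)}`. -/
theorem periodic3_pencil_central
    (ℏ θ : ℝ) (q : ℂ) (hq : q = Complex.exp (Complex.I * (ℏ : ℂ)))
    (I : TwoSidedIdeal A3)
    (hI : I = TwoSidedIdeal.span
      {x | ∃ n : ZMod 3, x = q⁻¹ • (v3 n * v3 (n + 1)) - q • (v3 (n + 1) * v3 n)
            - algebraMap ℂ A3 (Complex.I * (θ : ℂ))})
    (H₁ H₂ 𝓗 : A3)
    (hH₁ : H₁ = v3 0 + v3 1 + v3 2)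
    (hH₂ : H₂ = ∑ σ : Equiv.Perm (Fin 3),
      v3 ((σ 0).val : ZMod 3) * v3 ((σ 1).val : ZMod 3) * v3 ((σ 2).val : ZMod 3))
    (h𝓗 : 𝓗 = ((Real.sin ℏ : ℝ) : ℂ) • H₂ + ((θ : ℂ) * (2 + ((Real.cos (2 * ℏ) : ℝ) : ℂ))) • H₁) :
    ∀ k : ZMod 3, 𝓗 * v3 k - v3 k * 𝓗 ∈ I := by
  have hq0 : q ≠ 0 := by rw [hq]; exact Complex.exp_ne_zero _
  have e1 : q = Complex.cos (ℏ:ℂ) + Complex.sin (ℏ:ℂ) * Complex.I := by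
    rw [hq, mul_comm, Complex.exp_mul_I]
  have e2 : q⁻¹ = Complex.cos (ℏ:ℂ) - Complex.sin (ℏ:ℂ) * Complex.I := by
    rw [hq, ← Complex.exp_neg, show -(Complex.I * (ℏ:ℂ)) = (-(ℏ:ℂ)) * Complex.I by ring,
      Complex.exp_mul_I, Complex.cos_neg, Complex.sin_neg]; ring
  have e3 : q ^ 2 = Complex.cos (2*(ℏ:ℂ)) + Complex.sin (2*(ℏ:ℂ)) * Complex.I := by
    rw [hq, ← Complex.exp_mul_I, sq, ← Complex.exp_add]; congr 1; ring
  have e4 : q⁻¹ ^ 2 = Complex.cos (2*(ℏ:ℂ)) - Complex.sin (2*(ℏ:ℂ)) * Complex.I := by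
    rw [hq, ← Complex.exp_neg, show -(Complex.I * (ℏ:ℂ)) = (-(2*(ℏ:ℂ))) * Complex.I / 2 by ring]
    rw [sq, ← Complex.exp_add, show (-(2*(ℏ:ℂ))) * Complex.I / 2 + (-(2*(ℏ:ℂ))) * Complex.I / 2
        = (-(2*(ℏ:ℂ))) * Complex.I by ring, Complex.exp_mul_I, Complex.cos_neg, Complex.sin_neg]
    ring
  have hs : ((Real.sin ℏ : ℝ) : ℂ) = Complex.I / 2 * (q⁻¹ - q) := by
    rw [Complex.ofReal_sin]
    linear_combination (Complex.I/2) * e1 - (Complex.I/2) * e2 + Complex.sin (ℏ:ℂ) * Complex.I_sq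
  have hc : ((Real.cos (2 * ℏ) : ℝ) : ℂ) = (q ^ 2 + q⁻¹ ^ 2) / 2 := by
    rw [Complex.ofReal_cos, Complex.ofReal_mul, Complex.ofReal_ofNat]
    linear_combination -(e3 + e4) / 2
  have huniv : (Finset.univ : Finset (Equiv.Perm (Fin 3))) =
      {Equiv.refl (Fin 3), Equiv.swap 0 1, Equiv.swap 0 2, Equiv.swap 1 2,
        Equiv.swap 0 1 * Equiv.swap 1 2, Equiv.swap 1 2 * Equiv.swap 0 1} := by decide
  have hH₂x : H₂ = v3 0 * (v3 1 * v3 2) + v3 1 * (v3 0 * v3 2) + v3 2 * (v3 1 * v3 0)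
      + v3 0 * (v3 2 * v3 1) + v3 1 * (v3 2 * v3 0) + v3 2 * (v3 0 * v3 1) := by
    rw [hH₂, huniv]
    rw [Finset.sum_insert (by decide), Finset.sum_insert (by decide),
      Finset.sum_insert (by decide), Finset.sum_insert (by decide),
      Finset.sum_insert (by decide), Finset.sum_singleton]
    norm_num [Equiv.swap_apply_def, Fin.ext_iff, mul_assoc]
    abel
  have hgen : ∀ n : ZMod 3,
      (q⁻¹ • (v3 n * v3 (n + 1)) - q • (v3 (n + 1) * v3 n)
        - algebraMap ℂ A3 (Complex.I * (θ:ℂ))) ∈ I := by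
    intro n; rw [hI]; exact TwoSidedIdeal.subset_span ⟨n, rfl⟩
  have hG0 := hgen 0
  have hG1 := hgen 1
  have hG2 := hgen 2
  rw [show ((0 : ZMod 3) + 1) = 1 by decide] at hG0
  rw [show ((1 : ZMod 3) + 1) = 2 by decide] at hG1
  rw [show ((2 : ZMod 3) + 1) = 0 by decide] at hG2
  have hsm : ∀ (a : ℂ) (x y g : A3), g ∈ I → a • (x * (g * y)) ∈ I := by
    intro a x y g hgm
    rw [Algebra.smul_def]
    exact I.mul_mem_left _ _ (I.mul_mem_left _ _ (I.mul_mem_right _ _ hgm))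
  intro k
  have hk : k = 0 ∨ k = 1 ∨ k = 2 := by revert k; decide
  rcases hk with rfl | rfl | rfl
  · rw [h𝓗, hH₁, hH₂x, hs, hc, aux0 q hq0 θ]
    exact (I.add_mem (I.add_mem (I.add_mem (I.add_mem (I.add_mem (I.add_mem (I.add_mem (I.add_mem (I.add_mem (I.add_mem (I.add_mem (I.add_mem (hsm _ _ _ _ hG0) (hsm _ _ _ _ hG0)) (hsm _ _ _ _ hG0)) (hsm _ _ _ _ hG2)) (hsm _ _ _ _ hG1)) (hsm _ _ _ _ hG1)) (hsm _ _ _ _ hG2)) (hsm _ _ _ _ hG1)) (hsm _ _ _ _ hG0)) (hsm _ _ _ _ hG2)) (hsm _ _ _ _ hG0)) (hsm _ _ _ _ hG0)) (hsm _ _ _ _ hG2))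
  · rw [h𝓗, hH₁, hH₂x, hs, hc, aux1 q hq0 θ]
    exact (I.add_mem (I.add_mem (I.add_mem (I.add_mem (I.add_mem (I.add_mem (I.add_mem (I.add_mem (I.add_mem (hsm _ _ _ _ hG0) (hsm _ _ _ _ hG0)) (hsm _ _ _ _ hG1)) (hsm _ _ _ _ hG1)) (hsm _ _ _ _ hG1)) (hsm _ _ _ _ hG1)) (hsm _ _ _ _ hG0)) (hsm _ _ _ _ hG0)) (hsm _ _ _ _ hG0)) (hsm _ _ _ _ hG1))
  · rw [h𝓗, hH₁, hH₂x, hs, hc, aux2 q hq0 θ]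
    exact (I.add_mem (I.add_mem (I.add_mem (I.add_mem (I.add_mem (I.add_mem (I.add_mem (I.add_mem (I.add_mem (I.add_mem (I.add_mem (hsm _ _ _ _ hG0) (hsm _ _ _ _ hG1)) (hsm _ _ _ _ hG1)) (hsm _ _ _ _ hG1)) (hsm _ _ _ _ hG2)) (hsm _ _ _ _ hG1)) (hsm _ _ _ _ hG0)) (hsm _ _ _ _ hG1)) (hsm _ _ _ _ hG0)) (hsm _ _ _ _ hG2)) (hsm _ _ _ _ hG1)) (hsm _ _ _ _ hG2))
end
end

section
/- Let A₃ = ℂ⟨u₁,u₂,u₃⟩ with the period-3 Volterra derivation ∂(u_n) = q(u_{n+1}u_n − u_n u_{n−1}) (indices mod 3, q ∈ ℂ*, q² = ω), and let I be the ideal generated by u_n u_{n+1} − ω u_{n+1}u_n for n ∈ ℤ/3. Then in A₃/I the Heisenberg form holds: ∂(u_n) = (q^{-1} − q)^{-1}[H₁, u_n] for each n, where H₁ = u₁+u₂+u₃, provided q² ≠ 1. -/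
open scoped Classical

noncomputable section

/-- for the period-3 Volterra derivation `∂(u_n) = q(u_{n+1}u_n − u_n u_{n−1})`
and the ideal with relations `u_n u_{n+1} = ω u_{n+1}u_n`, `ω = q² ≠ 1`, the Heisenberg form
`∂(u_n) = (q⁻¹ − q)⁻¹ [H₁, u_n]` holds in the quotient `A₃/I`, i.e. the difference
`(q⁻¹ − q)·∂(u_n) − [H₁,u_n]` lies in `I`. -/
theorem periodic3_heisenberg_form
    (q ω : ℂ) (hq : q ≠ 0) (hωq : ω = q ^ 2) (hω1 : q ^ 2 ≠ 1)
    (D : A3 →ₗ[ℂ] A3)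
    (hLeib : ∀ a b : A3, D (a * b) = D a * b + a * D b)
    (hD : ∀ n : ZMod 3, D (v3 n) = q • (v3 (n + 1) * v3 n - v3 n * v3 (n - 1)))
    (I : TwoSidedIdeal A3)
    (hI : I = TwoSidedIdeal.span
      {x | ∃ n : ZMod 3, x = v3 n * v3 (n + 1) - ω • (v3 (n + 1) * v3 n)})
    (H₁ : A3) (hH₁ : H₁ = v3 0 + v3 1 + v3 2) :
    ∀ n : ZMod 3, (q⁻¹ - q) • D (v3 n) - (H₁ * v3 n - v3 n * H₁) ∈ I := by
  intro n
  have hgen : ∀ m : ZMod 3, v3 m * v3 (m + 1) - ω • (v3 (m + 1) * v3 m) ∈ I := by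
    intro m
    rw [hI]
    exact TwoSidedIdeal.subset_span ⟨m, rfl⟩
  have h1 := hgen n
  have h2 := hgen (n - 1)
  rw [show n - 1 + 1 = n by ring] at h2
  have key : (q⁻¹ - q) • D (v3 n) - (H₁ * v3 n - v3 n * H₁) =
      (v3 n * v3 (n + 1) - ω • (v3 (n + 1) * v3 n)) -
      (v3 (n - 1) * v3 n - ω • (v3 n * v3 (n - 1))) := by
    have hperm : H₁ = v3 n + v3 (n + 1) + v3 (n - 1) := by
      rw [hH₁]
      fin_cases n
      · show v3 0 + v3 1 + v3 2 = v3 0 + v3 1 + v3 2; rfl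
      · show v3 0 + v3 1 + v3 2 = v3 1 + v3 2 + v3 0; abel
      · show v3 0 + v3 1 + v3 2 = v3 2 + v3 0 + v3 1; abel
    rw [hD, hperm, hωq]
    simp only [smul_smul, smul_sub, add_mul, mul_add]
    match_scalars <;> field_simp <;> ring
  rw [key]
  exact I.sub_mem h1 h2
end
end

section
/- Let A₄ = ℂ⟨u₁,u₂,u₃,u₄⟩ and I_b the ideal generated by the relations u₁u₂ = ω u₂u₁, u₃u₄ = ω u₄u₃, u₂u₃ = −ω u₃u₂, u₄u₁ = −ω u₁u₄, u₁u₃ = −u₃u₁, u₂u₄ = −u₄u₂, with ω ∈ ℂ*. Then in A₄/I_b the elements 𝓗 = u₄u₃u₂u₁, 𝓗₁ = u₃²u₁², 𝓗₂ = u₄²u₂² are central, and the elements H₁ = u₃u₁ and H₂ = u₄u₂ anticommute with H = u₁+u₂+u₃+u₄ while H², H₁, H₂ pairwise commute. -/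
open scoped Classical

noncomputable section

abbrev A4 : Type := FreeAlgebra ℂ (ZMod 4)

def v4 (n : ZMod 4) : A4 := FreeAlgebra.ι ℂ n

theorem key_aux {R : Type*} [Ring R] (a b c d w wi : R)
    (hw : ∀ x : R, w * x = x * w) (hwc : ∀ x : R, wi * x = x * wi)
    (hwi : w * wi = 1)
    (hab : a * b = w * (b * a)) (hcd : c * d = w * (d * c))
    (hbc : b * c = -(w * (c * b))) (hda : d * a = -(w * (a * d)))
    (hac : a * c = -(c * a)) (hbd : b * d = -(d * b)) :
    (d*c*b*a*a = a*(d*c*b*a)) ∧ (d*c*b*a*b = b*(d*c*b*a)) ∧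
    (d*c*b*a*c = c*(d*c*b*a)) ∧ (d*c*b*a*d = d*(d*c*b*a)) ∧
    (c^2*a^2*a = a*(c^2*a^2)) ∧ (c^2*a^2*b = b*(c^2*a^2)) ∧
    (c^2*a^2*c = c*(c^2*a^2)) ∧ (c^2*a^2*d = d*(c^2*a^2)) ∧
    (d^2*b^2*a = a*(d^2*b^2)) ∧ (d^2*b^2*b = b*(d^2*b^2)) ∧
    (d^2*b^2*c = c*(d^2*b^2)) ∧ (d^2*b^2*d = d*(d^2*b^2)) ∧
    (c*a*(a+b+c+d) + (a+b+c+d)*(c*a) = 0) ∧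
    (d*b*(a+b+c+d) + (a+b+c+d)*(d*b) = 0) ∧
    (c*a*(d*b) - d*b*(c*a) = 0) := by
  have hwi' : wi * w = 1 := by rw [hwc w]; exact hwi
  have had : a * d = -(wi * (d * a)) := by
    rw [hda, mul_neg, ← mul_assoc, hwi', one_mul, neg_neg]
  have hab' : ∀ t, a * (b * t) = w * (b * (a * t)) := by
    intro t; rw [← mul_assoc, hab]; simp only [mul_assoc]
  have hcd' : ∀ t, c * (d * t) = w * (d * (c * t)) := by
    intro t; rw [← mul_assoc, hcd]; simp only [mul_assoc]
  have hbc' : ∀ t, b * (c * t) = -(w * (c * (b * t))) := by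
    intro t; rw [← mul_assoc, hbc]; simp only [neg_mul, mul_assoc]
  have had' : ∀ t, a * (d * t) = -(wi * (d * (a * t))) := by
    intro t; rw [← mul_assoc, had]; simp only [neg_mul, mul_assoc]
  have hac' : ∀ t, a * (c * t) = -(c * (a * t)) := by
    intro t; rw [← mul_assoc, hac]; simp only [neg_mul, mul_assoc]
  have hbd' : ∀ t, b * (d * t) = -(d * (b * t)) := by
    intro t; rw [← mul_assoc, hbd]; simp only [neg_mul, mul_assoc]
  have mw : ∀ x : R, ∀ t, x * (w * t) = w * (x * t) := by
    intro x t; rw [← mul_assoc, ← hw, mul_assoc]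
  have mwi : ∀ x : R, ∀ t, x * (wi * t) = wi * (x * t) := by
    intro x t; rw [← mul_assoc, ← hwc, mul_assoc]
  have mw2 : ∀ x : R, x * w = w * x := fun x => (hw x).symm
  have mwi2 : ∀ x : R, x * wi = wi * x := fun x => (hwc x).symm
  have coll1 : ∀ t, w * (wi * t) = t := by
    intro t; rw [← mul_assoc, hwi, one_mul]
  have coll2 : ∀ t, wi * (w * t) = t := by
    intro t; rw [← mul_assoc, hwi', one_mul]
  refine ⟨?_, ?_, ?_, ?_, ?_, ?_, ?_, ?_, ?_, ?_, ?_, ?_, ?_, ?_, ?_⟩ <;>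
    simp only [pow_two, mul_add, add_mul, mul_assoc, mul_neg, neg_mul, neg_neg,
      hab, hab', hcd, hcd', hbc, hbc', had, had', hac, hac', hbd, hbd',
      mw a, mw b, mw c, mw d, mwi a, mwi b, mwi c, mwi d,
      mw2 a, mw2 b, mw2 c, mw2 d, mwi2 a, mwi2 b, mwi2 c, mwi2 d,
      coll1, coll2, hwi, hwi', one_mul] <;>
    abel

theorem sq_comm_aux {R : Type*} [Ring R] (h x : R) (hx : x*h + h*x = 0) :
    h^2*x - x*h^2 = 0 := by
  have hhx : h*x = -(x*h) := eq_neg_of_add_eq_zero_right hx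
  have h2 : h*(h*x) = x*(h*h) := by
    rw [hhx, mul_neg, ← mul_assoc, hhx, neg_mul, neg_neg, mul_assoc]
  rw [pow_two, mul_assoc, h2, sub_self]

/-- in `A₄/I_b`, the elements `𝓗 = u₄u₃u₂u₁`, `𝓗₁ = u₃²u₁²`, `𝓗₂ = u₄²u₂²`
are central; `H₁ = u₃u₁` and `H₂ = u₄u₂` anticommute with `H = u₁+u₂+u₃+u₄`;
and `H², H₁, H₂` pairwise commute. (Generators `u₁,…,u₄` are `v4 0,…,v4 3`.) -/
theorem periodic4_Ib_structure
    (ω : ℂ) (hω : ω ≠ 0)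
    (Ib : TwoSidedIdeal A4)
    (hIb : Ib = TwoSidedIdeal.span
      ({v4 0 * v4 1 - ω • (v4 1 * v4 0),
        v4 2 * v4 3 - ω • (v4 3 * v4 2),
        v4 1 * v4 2 + ω • (v4 2 * v4 1),
        v4 3 * v4 0 + ω • (v4 0 * v4 3),
        v4 0 * v4 2 + v4 2 * v4 0,
        v4 1 * v4 3 + v4 3 * v4 1} : Set A4))
    (H H₁ H₂ : A4)
    (hH : H = v4 0 + v4 1 + v4 2 + v4 3)
    (hH₁ : H₁ = v4 2 * v4 0) (hH₂ : H₂ = v4 3 * v4 1) :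
    (∀ k : ZMod 4,
        (v4 3 * v4 2 * v4 1 * v4 0) * v4 k - v4 k * (v4 3 * v4 2 * v4 1 * v4 0) ∈ Ib) ∧
    (∀ k : ZMod 4, (v4 2 ^ 2 * v4 0 ^ 2) * v4 k - v4 k * (v4 2 ^ 2 * v4 0 ^ 2) ∈ Ib) ∧
    (∀ k : ZMod 4, (v4 3 ^ 2 * v4 1 ^ 2) * v4 k - v4 k * (v4 3 ^ 2 * v4 1 ^ 2) ∈ Ib) ∧
    (H₁ * H + H * H₁ ∈ Ib) ∧ (H₂ * H + H * H₂ ∈ Ib) ∧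
    (H ^ 2 * H₁ - H₁ * H ^ 2 ∈ Ib) ∧ (H ^ 2 * H₂ - H₂ * H ^ 2 ∈ Ib) ∧
    (H₁ * H₂ - H₂ * H₁ ∈ Ib) := by
  subst hH hH₁ hH₂
  set f : A4 →+* Ib.ringCon.Quotient := Ib.ringCon.mk' with hf
  have hsurj : Function.Surjective f := fun q => Quot.inductionOn q fun y => ⟨y, rfl⟩
  have hmem : ∀ x : A4, f x = 0 → x ∈ Ib := by
    intro x h
    have h2 : f x = f 0 := by rw [h, map_zero]
    exact (RingCon.eq Ib.ringCon).mp h2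
  have hmem2 : ∀ x : A4, x ∈ Ib → f x = 0 := by
    intro x hx
    have h2 : f x = f 0 := (RingCon.eq Ib.ringCon).mpr hx
    rw [h2, map_zero]
  have hsm : ∀ x : A4, f (ω • x) = f (ω • (1 : A4)) * f x := by
    intro x; rw [← map_mul, smul_mul_assoc, one_mul]
  have hsm' : ∀ x : A4, f (ω⁻¹ • x) = f (ω⁻¹ • (1 : A4)) * f x := by
    intro x; rw [← map_mul, smul_mul_assoc, one_mul]
  have hcen : ∀ x, f (ω • (1 : A4)) * x = x * f (ω • (1 : A4)) := by
    intro x; obtain ⟨y, rfl⟩ := hsurj x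
    rw [← map_mul, ← map_mul]
    congr 1
    rw [smul_mul_assoc, one_mul, mul_smul_comm, mul_one]
  have hcen' : ∀ x, f (ω⁻¹ • (1 : A4)) * x = x * f (ω⁻¹ • (1 : A4)) := by
    intro x; obtain ⟨y, rfl⟩ := hsurj x
    rw [← map_mul, ← map_mul]
    congr 1
    rw [smul_mul_assoc, one_mul, mul_smul_comm, mul_one]
  have hwinv : f (ω • (1 : A4)) * f (ω⁻¹ • (1 : A4)) = 1 := by
    rw [← map_mul, smul_mul_assoc, one_mul, smul_smul, mul_inv_cancel₀ hω, one_smul, map_one]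
  -- the six relations in the quotient
  have m1 : f (v4 0 * v4 1 - ω • (v4 1 * v4 0)) = 0 := by
    apply hmem2; rw [hIb]
    exact TwoSidedIdeal.subset_span (Set.mem_insert _ _)
  have m2 : f (v4 2 * v4 3 - ω • (v4 3 * v4 2)) = 0 := by
    apply hmem2; rw [hIb]
    exact TwoSidedIdeal.subset_span (Set.mem_insert_of_mem _ (Set.mem_insert _ _))
  have m3 : f (v4 1 * v4 2 + ω • (v4 2 * v4 1)) = 0 := by
    apply hmem2; rw [hIb]
    exact TwoSidedIdeal.subset_span (Set.mem_insert_of_mem _ (Set.mem_insert_of_mem _ (Set.mem_insert _ _)))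
  have m4 : f (v4 3 * v4 0 + ω • (v4 0 * v4 3)) = 0 := by
    apply hmem2; rw [hIb]
    exact TwoSidedIdeal.subset_span (Set.mem_insert_of_mem _ (Set.mem_insert_of_mem _ (Set.mem_insert_of_mem _ (Set.mem_insert _ _))))
  have m5 : f (v4 0 * v4 2 + v4 2 * v4 0) = 0 := by
    apply hmem2; rw [hIb]
    exact TwoSidedIdeal.subset_span (Set.mem_insert_of_mem _ (Set.mem_insert_of_mem _ (Set.mem_insert_of_mem _ (Set.mem_insert_of_mem _ (Set.mem_insert _ _)))))
  have m6 : f (v4 1 * v4 3 + v4 3 * v4 1) = 0 := by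
    apply hmem2; rw [hIb]
    exact TwoSidedIdeal.subset_span (Set.mem_insert_of_mem _ (Set.mem_insert_of_mem _ (Set.mem_insert_of_mem _ (Set.mem_insert_of_mem _ (Set.mem_insert_of_mem _ (Set.mem_singleton _))))))
  rw [map_sub, sub_eq_zero, map_mul, hsm, map_mul] at m1 m2
  rw [map_add, map_mul, hsm, map_mul] at m3 m4
  rw [map_add, map_mul, map_mul] at m5 m6
  have hab := m1
  have hcd := m2
  have hbc := eq_neg_of_add_eq_zero_left m3
  have hda := eq_neg_of_add_eq_zero_left m4
  have hac := eq_neg_of_add_eq_zero_left m5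
  have hbd := eq_neg_of_add_eq_zero_left m6
  obtain ⟨k1, k2, k3, k4, k5, k6, k7, k8, k9, k10, k11, k12, k13, k14, k15⟩ :=
    key_aux (f (v4 0)) (f (v4 1)) (f (v4 2)) (f (v4 3))
      (f (ω • (1 : A4))) (f (ω⁻¹ • (1 : A4))) hcen hcen' hwinv hab hcd hbc hda hac hbd
  refine ⟨?_, ?_, ?_, ?_, ?_, ?_, ?_, ?_⟩
  · intro k
    apply hmem
    rw [map_sub, sub_eq_zero]
    simp only [map_mul]
    fin_cases k
    exacts [k1, k2, k3, k4]
  · intro k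
    apply hmem
    rw [map_sub, sub_eq_zero]
    simp only [map_mul, map_pow]
    fin_cases k
    exacts [k5, k6, k7, k8]
  · intro k
    apply hmem
    rw [map_sub, sub_eq_zero]
    simp only [map_mul, map_pow]
    fin_cases k
    exacts [k9, k10, k11, k12]
  · apply hmem
    simp only [map_add, map_mul]
    exact k13
  · apply hmem
    simp only [map_add, map_mul]
    exact k14
  · apply hmem
    simp only [map_sub, map_pow, map_add, map_mul]
    exact sq_comm_aux _ _ k13
  · apply hmem
    simp only [map_sub, map_pow, map_add, map_mul]
    exact sq_comm_aux _ _ k14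
  · apply hmem
    simp only [map_sub, map_mul]
    exact k15
end
end

section
/- Let A₅ = ℂ⟨u₁,…,u₅⟩ with the ideal I generated by u_n u_{n+1} − ω u_{n+1}u_n (n ∈ ℤ/5, indices mod 5) and u_n u_m − u_m u_n for all other pairs. Then in A₅/I the element 𝓗 = u₅u₄u₃u₂u₁ is central, and H₁ = Σ_{k=1}^5 u_k and H₂ = Σ_{k∈ℤ/5}(u_k² + u_k u_{k+1} + u_{k+1}u_k) commute: [H₁,H₂] = 0 in A₅/I. -/
open scoped Classical

noncomputable section

/-- `A₅ = ℂ⟨u₁,…,u₅⟩`, generators indexed by `ZMod 5` (so `u₁,…,u₅` are `v5 0,…,v5 4`). -/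
abbrev A5 : Type := FreeAlgebra ℂ (ZMod 5)

def v5 (n : ZMod 5) : A5 := FreeAlgebra.ι ℂ n

/-- The quotient of `A5` by any ring congruence is a `ℂ`-module. -/
instance quotModule (c : RingCon A5) : Module ℂ c.Quotient :=
  Function.Surjective.module ℂ (RingCon.mk' c).toAddMonoidHom
    (fun x => Quotient.inductionOn' x fun a => ⟨a, rfl⟩) (fun _ _ => rfl)

lemma sum_zmod5 {M : Type*} [AddCommMonoid M] (f : ZMod 5 → M) :
    ∑ k : ZMod 5, f k = f 0 + (f 1 + (f 2 + (f 3 + f 4))) := by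
  rw [show (Finset.univ : Finset (ZMod 5)) = {0,1,2,3,4} from by decide,
    Finset.sum_insert (by decide), Finset.sum_insert (by decide),
    Finset.sum_insert (by decide), Finset.sum_insert (by decide), Finset.sum_singleton]

/-- in `A₅/I`, the element `𝓗 = u₅u₄u₃u₂u₁` is central and the Hamiltonians
`H₁ = Σ u_k`, `H₂ = Σ (u_k² + u_k u_{k+1} + u_{k+1} u_k)` commute. -/
theorem periodic5_integrals
    (ω : ℂ) (hω : ω ≠ 0)
    (I : TwoSidedIdeal A5)
    (hI : I = TwoSidedIdeal.span
      ({x | ∃ n : ZMod 5, x = v5 n * v5 (n + 1) - ω • (v5 (n + 1) * v5 n)} ∪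
       {x | ∃ i j : ZMod 5, j ≠ i + 1 ∧ i ≠ j + 1 ∧ i ≠ j ∧ x = v5 i * v5 j - v5 j * v5 i}))
    (H₁ H₂ : A5)
    (hH₁ : H₁ = ∑ k : ZMod 5, v5 k)
    (hH₂ : H₂ = ∑ k : ZMod 5, (v5 k ^ 2 + v5 k * v5 (k + 1) + v5 (k + 1) * v5 k)) :
    (∀ k : ZMod 5,
      (v5 4 * v5 3 * v5 2 * v5 1 * v5 0) * v5 k
        - v5 k * (v5 4 * v5 3 * v5 2 * v5 1 * v5 0) ∈ I) ∧
    H₁ * H₂ - H₂ * H₁ ∈ I := by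
  set π : A5 →+* I.ringCon.Quotient := RingCon.mk' I.ringCon with hπ
  have memI : ∀ x : A5, π x = 0 → x ∈ I := by
    intro x h
    rw [TwoSidedIdeal.mem_iff]
    exact I.ringCon.eq.mp h
  have genzero : ∀ x : A5,
      x ∈ ({x | ∃ n : ZMod 5, x = v5 n * v5 (n + 1) - ω • (v5 (n + 1) * v5 n)} ∪
       {x | ∃ i j : ZMod 5, j ≠ i + 1 ∧ i ≠ j + 1 ∧ i ≠ j ∧ x = v5 i * v5 j - v5 j * v5 i} :
         Set A5) → π x = 0 := by
    intro x hx
    exact I.ringCon.eq.mpr ((TwoSidedIdeal.mem_iff _ _).mp (hI ▸ TwoSidedIdeal.subset_span hx))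
  have hsmul : ∀ (s : ℂ) (y : A5), π (s • y) = s • π y := fun _ _ => rfl
  have hnear : ∀ n : ZMod 5,
      π (v5 n) * π (v5 (n + 1)) = ω • (π (v5 (n + 1)) * π (v5 n)) := by
    intro n
    have h0 : π (v5 n * v5 (n + 1) - ω • (v5 (n + 1) * v5 n)) = 0 :=
      genzero _ (Or.inl ⟨n, rfl⟩)
    have h1 : π (v5 n) * π (v5 (n + 1)) - ω • (π (v5 (n + 1)) * π (v5 n)) = 0 := by
      simpa only [map_sub, map_mul, hsmul] using h0
    exact sub_eq_zero.mp h1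
  have hfar : ∀ i j : ZMod 5, j ≠ i + 1 → i ≠ j + 1 → i ≠ j →
      π (v5 i) * π (v5 j) = π (v5 j) * π (v5 i) := by
    intro i j h1 h2 h3
    have h0 : π (v5 i * v5 j - v5 j * v5 i) = 0 :=
      genzero _ (Or.inr ⟨i, j, h1, h2, h3, rfl⟩)
    have h1' : π (v5 i) * π (v5 j) - π (v5 j) * π (v5 i) = 0 := by
      simpa only [map_sub, map_mul] using h0
    exact sub_eq_zero.mp h1'
  have pair : ∀ (x y : I.ringCon.Quotient) (s : ℂ), x * y = s • (y * x) →
      ∀ z, x * (y * z) = s • (y * (x * z)) := by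
    intro x y s h z
    rw [← mul_assoc, h, smul_mul_assoc, mul_assoc]
  have comm' : ∀ x y : I.ringCon.Quotient, x * y = y * x →
      ∀ z, x * (y * z) = y * (x * z) := by
    intro x y h z
    rw [← mul_assoc, h, mul_assoc]
  have r01 : π (v5 0) * π (v5 1) = ω • (π (v5 1) * π (v5 0)) := hnear 0
  have r12 : π (v5 1) * π (v5 2) = ω • (π (v5 2) * π (v5 1)) := hnear 1
  have r23 : π (v5 2) * π (v5 3) = ω • (π (v5 3) * π (v5 2)) := hnear 2
  have r34 : π (v5 3) * π (v5 4) = ω • (π (v5 4) * π (v5 3)) := hnear 3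
  have r40 : π (v5 4) * π (v5 0) = ω • (π (v5 0) * π (v5 4)) := hnear 4
  have r04 : π (v5 0) * π (v5 4) = ω⁻¹ • (π (v5 4) * π (v5 0)) := by
    rw [r40, smul_smul, inv_mul_cancel₀ hω, one_smul]
  have r02 : π (v5 0) * π (v5 2) = π (v5 2) * π (v5 0) :=
    hfar 0 2 (by decide) (by decide) (by decide)
  have r03 : π (v5 0) * π (v5 3) = π (v5 3) * π (v5 0) :=
    hfar 0 3 (by decide) (by decide) (by decide)
  have r13 : π (v5 1) * π (v5 3) = π (v5 3) * π (v5 1) :=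
    hfar 1 3 (by decide) (by decide) (by decide)
  have r14 : π (v5 1) * π (v5 4) = π (v5 4) * π (v5 1) :=
    hfar 1 4 (by decide) (by decide) (by decide)
  have r24 : π (v5 2) * π (v5 4) = π (v5 4) * π (v5 2) :=
    hfar 2 4 (by decide) (by decide) (by decide)
  have r01' := pair _ _ _ r01
  have r12' := pair _ _ _ r12
  have r23' := pair _ _ _ r23
  have r34' := pair _ _ _ r34
  have r04' := pair _ _ _ r04
  have r02' := comm' _ _ r02
  have r03' := comm' _ _ r03
  have r13' := comm' _ _ r13
  have r14' := comm' _ _ r14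
  have r24' := comm' _ _ r24
  have cancel : ∀ x y : I.ringCon.Quotient, ω • x = ω • y → x = y := by
    intro x y h
    have h2 := congrArg (fun z => ω⁻¹ • z) h
    simpa [smul_smul, inv_mul_cancel₀ hω] using h2
  have cases5 : ∀ m : ZMod 5, m = 0 ∨ m = 1 ∨ m = 2 ∨ m = 3 ∨ m = 4 := by decide
  constructor
  · intro k
    apply memI
    rw [map_sub, sub_eq_zero]
    simp only [map_mul]
    rcases cases5 k with rfl | rfl | rfl | rfl | rfl <;>
    · apply cancel
      simp only [mul_assoc, r01, r12, r23, r34, r04, r02, r03, r13, r14, r24,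
        r01', r12', r23', r34', r04', r02', r03', r13', r14', r24',
        smul_mul_assoc, mul_smul_comm, smul_smul]
      try match_scalars <;> (try field_simp) <;> (try ring1)
  · apply memI
    rw [hH₁, hH₂, sum_zmod5, sum_zmod5, map_sub, sub_eq_zero]
    simp only [show ((0:ZMod 5)+1) = 1 from rfl, show ((1:ZMod 5)+1) = 2 from rfl,
      show ((2:ZMod 5)+1) = 3 from rfl, show ((3:ZMod 5)+1) = 4 from rfl,
      show ((4:ZMod 5)+1) = 0 from rfl]
    simp only [map_mul, map_add, map_pow, pow_two]
    simp only [mul_add, add_mul, mul_assoc, r01, r12, r23, r34, r04, r02, r03, r13, r14, r24,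
      r01', r12', r23', r34', r04', r02', r03', r13', r14', r24',
      smul_mul_assoc, mul_smul_comm, smul_smul, smul_add]
    match_scalars <;> (try field_simp) <;> (try ring1)
end
end
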